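/- In G □ H, for any set M ⊆ V(G□H) and any edge e = (u_i,v_j)(u_i,v_{j'}) of the copy H_i of H (i.e., an H-layer edge), P_{G□H}(M, e) = P_{H_i}(M ∩ V(H_i), e), where H_i is the subgraph induced by {(u_i,v) : v ∈ V(H)}. Symmetrically for G-layer edges. -/

import Mathlib

open SimpleGraph

/-- A set `M` of vertices is a distance-edge-monitoring set of `G`. -/
def demSet {V : Type*} (G : SimpleGraph V) (M : Set V) : Prop :=
  ∀ e ∈ G.edgeSet, ∃ x ∈ M, ∃ y : V, G.dist x y ≠ (G.deleteEdges {e}).dist x y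

/-- The distance-edge-monitoring number of `G`. -/
noncomputable def dem {V : Type*} (G : SimpleGraph V) [Fintype V] : ℕ :=
  sInf {k | ∃ M : Finset V, M.card = k ∧ demSet G ↑M}

/-- `Pset F M e` is the set of pairs `(x, y)` with `x ∈ M` such that deleting the
edge `e` changes the distance from `x` to `y`. -/
def Pset {α : Type*} (F : SimpleGraph α) (M : Set α) (e : Sym2 α) : Set (α × α) :=
  {p | p.1 ∈ M ∧ F.dist p.1 p.2 ≠ (F.deleteEdges {e}).dist p.1 p.2}

namespace DemAux

variable {V W : Type*} {G : SimpleGraph V} {H : SimpleGraph W}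

lemma len_bpl {a₁ a₂ : V} (b : W) (p : G.Walk a₁ a₂) :
    (p.boxProdLeft H b).length = p.length := SimpleGraph.Walk.length_map _ _

lemma len_bpr {b₁ b₂ : W} (a : V) (p : H.Walk b₁ b₂) :
    (p.boxProdRight G a).length = p.length := SimpleGraph.Walk.length_map _ _

lemma edges_bpl {a₁ a₂ : V} (b : W) (p : G.Walk a₁ a₂) :
    (p.boxProdLeft H b).edges = p.edges.map (Sym2.map fun a => (a, b)) :=
  SimpleGraph.Walk.edges_map _ _

lemma edges_bpr {b₁ b₂ : W} (a : V) (p : H.Walk b₁ b₂) :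
    (p.boxProdRight G a).edges = p.edges.map (Sym2.map fun w => (a, w)) :=
  SimpleGraph.Walk.edges_map _ _

lemma walk_length_lower (hG : G.Connected) (hH : H.Connected) :
    ∀ {x y : V × W} (w : (G □ H).Walk x y),
      G.dist x.1 y.1 + H.dist x.2 y.2 ≤ w.length := by
  intro x y w
  induction w with
  | nil => simp
  | @cons a z c h q ih =>
    rw [SimpleGraph.Walk.length_cons]
    rcases SimpleGraph.boxProd_adj.mp h with ⟨hA, hb⟩ | ⟨hA, ha⟩
    · have ht : G.dist a.1 c.1 ≤ G.dist a.1 z.1 + G.dist z.1 c.1 := hG.dist_triangle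
      have h1 : G.dist a.1 z.1 = 1 := SimpleGraph.dist_eq_one_iff_adj.2 hA
      rw [hb]
      omega
    · have ht : H.dist a.2 c.2 ≤ H.dist a.2 z.2 + H.dist z.2 c.2 := hH.dist_triangle
      have h1 : H.dist a.2 z.2 = 1 := SimpleGraph.dist_eq_one_iff_adj.2 hA
      rw [ha]
      omega

lemma boxProd_dist (hG : G.Connected) (hH : H.Connected) (x y : V × W) :
    (G □ H).dist x y = G.dist x.1 y.1 + H.dist x.2 y.2 := by
  refine le_antisymm ?_ ?_
  · obtain ⟨p, hp⟩ := hG.exists_walk_length_eq_dist x.1 y.1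
    obtain ⟨q, hq⟩ := hH.exists_walk_length_eq_dist x.2 y.2
    have := SimpleGraph.dist_le ((p.boxProdLeft H x.2).append (q.boxProdRight G y.1))
    simpa [SimpleGraph.Walk.length_append, len_bpl,
      len_bpr, SimpleGraph.Walk.length_map, hp, hq] using this
  · obtain ⟨w, hw⟩ := (hG.boxProd hH).exists_walk_length_eq_dist x y
    rw [← hw]; exact walk_length_lower hG hH w

lemma sym2_layer_eq {u a : V} {s t v v' : W}
    (h : s((a, s), (a, t)) = s((u, v), (u, v'))) : a = u := by
  rw [Sym2.eq_iff] at h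
  rcases h with ⟨h1, _⟩ | ⟨h1, _⟩ <;> exact congrArg Prod.fst h1

lemma sym2_cross_ne {a b u : V} {t v v' : W} (hvv' : v ≠ v') :
    s((a, t), (b, t)) ≠ s((u, v), (u, v')) := by
  intro h
  rw [Sym2.eq_iff] at h
  rcases h with ⟨h1, h2⟩ | ⟨h1, h2⟩
  · exact hvv' ((congrArg Prod.snd h1).symm.trans (congrArg Prod.snd h2))
  · exact hvv' ((congrArg Prod.snd h2).symm.trans (congrArg Prod.snd h1))

/-- Lift a walk in `H` minus the edge to the `u`-layer of the product minus the layer edge. -/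
lemma exists_layer_walk (u : V) {v v' : W} {b d : W}
    (p : (H.deleteEdges {s(v, v')}).Walk b d) :
    ∃ q : ((G □ H).deleteEdges {s((u, v), (u, v'))}).Walk (u, b) (u, d),
      q.length = p.length := by
  have hsub : (H.deleteEdges {s(v, v')}).edgeSet ⊆ H.edgeSet :=
    SimpleGraph.edgeSet_mono (SimpleGraph.deleteEdges_le _)
  let p1 : H.Walk b d := p.transfer H (fun e he => hsub (p.edges_subset_edgeSet he))
  have hp1e : p1.edges = p.edges := p.edges_transfer _
  let p2 : (G □ H).Walk (u, b) (u, d) := p1.boxProdRight G u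
  have hp2e : p2.edges = p1.edges.map (Sym2.map fun w => (u, w)) := by
    simp [p2, edges_bpr, SimpleGraph.Walk.edges_map]
  have havoid : ∀ e ∈ p2.edges, e ∉ ({s((u, v), (u, v'))} : Set (Sym2 (V × W))) := by
    intro e he hmem
    rw [hp2e, hp1e, List.mem_map] at he
    obtain ⟨e', he', rfl⟩ := he
    rw [Set.mem_singleton_iff] at hmem
    have he'H := p.edges_subset_edgeSet he'
    rw [SimpleGraph.edgeSet_deleteEdges] at he'H
    apply he'H.2
    have : Sym2.map (fun w => (u, w)) e' = Sym2.map (fun w => (u, w)) s(v, v') := by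
      rw [hmem, Sym2.map_pair_eq]
    have hinj : Function.Injective (fun w : W => (u, w)) := fun x y hxy =>
      congrArg Prod.snd hxy
    exact Sym2.map.injective hinj this
  refine ⟨p2.toDeleteEdges _ havoid, ?_⟩
  simp [SimpleGraph.Walk.length_transfer, p2, p1, len_bpr,
    SimpleGraph.Walk.length_map]

/-- A walk of minimal product length avoiding the layer edge, when not both endpoints are in
layer `u`. -/
lemma exists_avoid_walk (hG : G.Connected) (hH : H.Connected)
    {u : V} {v v' : W} (hvv' : v ≠ v') {x y : V × W} (hxy : x.1 ≠ u ∨ y.1 ≠ u) :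
    ∃ q : ((G □ H).deleteEdges {s((u, v), (u, v'))}).Walk x y,
      q.length = G.dist x.1 y.1 + H.dist x.2 y.2 := by
  obtain ⟨pG, hpG⟩ := hG.exists_walk_length_eq_dist x.1 y.1
  obtain ⟨pH, hpH⟩ := hH.exists_walk_length_eq_dist x.2 y.2
  rcases hxy with hx | hy
  · -- H-walk in layer x.1, then G-walk at coordinate y.2
    let w : (G □ H).Walk x y :=
      ((pH.boxProdRight G x.1).append (pG.boxProdLeft H y.2)).copy (by simp) (by simp)
    have havoid : ∀ e ∈ w.edges, e ∉ ({s((u, v), (u, v'))} : Set (Sym2 (V × W))) := by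
      intro e he hmem
      rw [Set.mem_singleton_iff] at hmem
      subst hmem
      simp only [w, SimpleGraph.Walk.edges_copy, SimpleGraph.Walk.edges_append,
        List.mem_append, edges_bpr, edges_bpl,
        SimpleGraph.Walk.edges_map, List.mem_map] at he
      rcases he with ⟨e', _, he'⟩ | ⟨e', _, he'⟩
      · induction e' using Sym2.ind with
        | _ s t =>
          rw [Sym2.map_pair_eq] at he'
          exact hx (sym2_layer_eq he')
      · induction e' using Sym2.ind with
        | _ s t =>
          rw [Sym2.map_pair_eq] at he'
          exact sym2_cross_ne hvv' he'
    refine ⟨w.toDeleteEdges _ havoid, ?_⟩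
    simp [SimpleGraph.Walk.length_transfer, w, SimpleGraph.Walk.length_append,
      len_bpr, len_bpl,
      SimpleGraph.Walk.length_map, hpG, hpH]
    omega
  · -- G-walk at coordinate x.2, then H-walk in layer y.1
    let w : (G □ H).Walk x y :=
      ((pG.boxProdLeft H x.2).append (pH.boxProdRight G y.1)).copy (by simp) (by simp)
    have havoid : ∀ e ∈ w.edges, e ∉ ({s((u, v), (u, v'))} : Set (Sym2 (V × W))) := by
      intro e he hmem
      rw [Set.mem_singleton_iff] at hmem
      subst hmem
      simp only [w, SimpleGraph.Walk.edges_copy, SimpleGraph.Walk.edges_append,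
        List.mem_append, edges_bpr, edges_bpl,
        SimpleGraph.Walk.edges_map, List.mem_map] at he
      rcases he with ⟨e', _, he'⟩ | ⟨e', _, he'⟩
      · induction e' using Sym2.ind with
        | _ s t =>
          rw [Sym2.map_pair_eq] at he'
          exact sym2_cross_ne hvv' he'
      · induction e' using Sym2.ind with
        | _ s t =>
          rw [Sym2.map_pair_eq] at he'
          exact hy (sym2_layer_eq he')
    refine ⟨w.toDeleteEdges _ havoid, ?_⟩
    simp [SimpleGraph.Walk.length_transfer, w, SimpleGraph.Walk.length_append,
      len_bpr, len_bpl,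
      SimpleGraph.Walk.length_map, hpG, hpH]


/-- Any walk in the product-minus-layer-edge between two layer-`u` vertices either stays
essentially in the layer (giving a walk in `H` minus the edge) or is long. -/
lemma dichotomy (hG : G.Connected) (hH : H.Connected) {u : V} {v v' : W} :
    ∀ {x y : V × W} (w : ((G □ H).deleteEdges {s((u, v), (u, v'))}).Walk x y),
      x.1 = u → y.1 = u →
      (∃ p : (H.deleteEdges {s(v, v')}).Walk x.2 y.2, p.length ≤ w.length) ∨
        2 + H.dist x.2 y.2 ≤ w.length := by
  intro x y w
  induction w with
  | nil => intro _ _; exact Or.inl ⟨SimpleGraph.Walk.nil, le_rfl⟩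
  | @cons a z c h q ih =>
    intro ha hc
    obtain ⟨hadj, hne⟩ := SimpleGraph.deleteEdges_adj.mp h
    rw [Set.mem_singleton_iff] at hne
    rcases SimpleGraph.boxProd_adj.mp hadj with ⟨hGadj, hb⟩ | ⟨hHadj, haz⟩
    · -- G-step, so `z` leaves the layer
      have hz : z.1 ≠ u := by
        intro hz
        rw [ha, hz] at hGadj
        exact hGadj.ne rfl
      have hq : G.dist z.1 c.1 + H.dist z.2 c.2 ≤ q.length := by
        have := walk_length_lower hG hH (q.mapLe (SimpleGraph.deleteEdges_le _))
        rwa [SimpleGraph.Walk.length_map] at this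
      have h1 : 0 < G.dist z.1 c.1 := hG.pos_dist_of_ne (by rw [hc]; exact hz)
      right
      rw [SimpleGraph.Walk.length_cons, hb]
      omega
    · -- H-step within the layer
      have hz1 : z.1 = u := haz ▸ ha
      have hH' : (H.deleteEdges {s(v, v')}).Adj a.2 z.2 := by
        rw [SimpleGraph.deleteEdges_adj]
        refine ⟨hHadj, fun hmem => hne ?_⟩
        rw [Set.mem_singleton_iff] at hmem
        have : s(a, z) = s((a.1, a.2), (z.1, z.2)) := by simp
        rw [this, ha, hz1]
        have := congrArg (Sym2.map fun w => (u, w)) hmem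
        rwa [Sym2.map_pair_eq, Sym2.map_pair_eq] at this
      rcases ih hz1 hc with ⟨p, hp⟩ | hlong
      · refine Or.inl ⟨SimpleGraph.Walk.cons hH' p, ?_⟩
        rw [SimpleGraph.Walk.length_cons, SimpleGraph.Walk.length_cons]
        omega
      · right
        have ht : H.dist a.2 c.2 ≤ H.dist a.2 z.2 + H.dist z.2 c.2 := hH.dist_triangle
        have h1 : H.dist a.2 z.2 = 1 := SimpleGraph.dist_eq_one_iff_adj.2 hHadj
        rw [SimpleGraph.Walk.length_cons]
        omega

/-- Deleting a layer edge does not change distances when not both endpoints are in the layer. -/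
lemma del_dist_eq (hG : G.Connected) (hH : H.Connected) {u : V} {v v' : W}
    (hvv' : v ≠ v') {x y : V × W} (hxy : x.1 ≠ u ∨ y.1 ≠ u) :
    ((G □ H).deleteEdges {s((u, v), (u, v'))}).dist x y = (G □ H).dist x y := by
  obtain ⟨q, hq⟩ := exists_avoid_walk hG hH hvv' hxy
  refine le_antisymm ?_ ?_
  · rw [boxProd_dist hG hH, ← hq]
    exact SimpleGraph.dist_le q
  · have hr : ((G □ H).deleteEdges {s((u, v), (u, v'))}).Reachable x y := ⟨q⟩
    exact hr.dist_anti (SimpleGraph.deleteEdges_le _)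

/-- In-layer distances change in the product iff they change in the factor. -/
lemma del_dist_layer (hG : G.Connected) (hH : H.Connected) {u : V} {v v' : W}
    (hvv' : v ≠ v') (b d : W) :
    ((G □ H).deleteEdges {s((u, v), (u, v'))}).dist (u, b) (u, d) =
        (G □ H).dist (u, b) (u, d) ↔
      (H.deleteEdges {s(v, v')}).dist b d = H.dist b d := by
  have hbox : (G □ H).dist (u, b) (u, d) = H.dist b d := by
    rw [boxProd_dist hG hH]; simp
  by_cases hbd : b = d
  · subst hbd
    simp [hbox, SimpleGraph.dist_self]
  have hD : 0 < H.dist b d := hH.pos_dist_of_ne hbd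
  constructor
  · intro hFeq
    rw [hbox] at hFeq
    have hFne : ((G □ H).deleteEdges {s((u, v), (u, v'))}).dist (u, b) (u, d) ≠ 0 := by
      omega
    obtain ⟨w, hw⟩ :=
      (SimpleGraph.Reachable.of_dist_ne_zero hFne).exists_walk_length_eq_dist
    rcases dichotomy hG hH w rfl rfl with ⟨p, hp⟩ | hlong
    · have hr : (H.deleteEdges {s(v, v')}).Reachable b d := ⟨p⟩
      have hle : (H.deleteEdges {s(v, v')}).dist b d ≤ H.dist b d := by
        have h2 := SimpleGraph.dist_le p
        dsimp only at h2
        omega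
      have hge := hr.dist_anti (SimpleGraph.deleteEdges_le _)
      omega
    · dsimp only at hlong
      omega
  · intro hHeq
    have hH'ne : (H.deleteEdges {s(v, v')}).dist b d ≠ 0 := by omega
    obtain ⟨p, hp⟩ :=
      (SimpleGraph.Reachable.of_dist_ne_zero hH'ne).exists_walk_length_eq_dist
    obtain ⟨q, hq⟩ := exists_layer_walk (G := G) u p
    have hle : ((G □ H).deleteEdges {s((u, v), (u, v'))}).dist (u, b) (u, d) ≤ H.dist b d := by
      have := SimpleGraph.dist_le q
      omega
    have hr : ((G □ H).deleteEdges {s((u, v), (u, v'))}).Reachable (u, b) (u, d) := ⟨q⟩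
    have hge := hr.dist_anti (SimpleGraph.deleteEdges_le _)
    omega


lemma key (hG : G.Connected) (hH : H.Connected) (M : Set (V × W))
    (u : V) (v v' : W) (hvv' : H.Adj v v') :
    {p : (V × W) × (V × W) | p.1 ∈ M ∧ (G □ H).dist p.1 p.2 ≠
        ((G □ H).deleteEdges {s((u, v), (u, v'))}).dist p.1 p.2} =
      (fun q : W × W => ((u, q.1), (u, q.2))) ''
        {p : W × W | p.1 ∈ {w | (u, w) ∈ M} ∧ H.dist p.1 p.2 ≠
          (H.deleteEdges {s(v, v')}).dist p.1 p.2} := by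
  ext ⟨⟨a, b⟩, ⟨c, d⟩⟩
  simp only [Set.mem_setOf_eq, Set.mem_image, Prod.mk.injEq, Prod.ext_iff]
  constructor
  · rintro ⟨hM, hd⟩
    by_cases hau : a = u
    · by_cases hcu : c = u
      · subst hau; subst hcu
        refine ⟨(b, d), ⟨hM, ?_⟩, ⟨⟨rfl, rfl⟩, ⟨rfl, rfl⟩⟩⟩
        intro heq
        exact hd (((del_dist_layer hG hH hvv'.ne b d).2 heq.symm).symm)
      · exact absurd (del_dist_eq hG hH hvv'.ne (Or.inr hcu)).symm hd
    · exact absurd (del_dist_eq hG hH hvv'.ne (Or.inl hau)).symm hd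
  · rintro ⟨⟨qb, qd⟩, ⟨hM, hne⟩, ⟨hua, hqb⟩, ⟨huc, hqd⟩⟩
    subst hua; subst huc; subst hqb; subst hqd
    refine ⟨hM, fun heq => hne ?_⟩
    exact ((del_dist_layer hG hH hvv'.ne qb qd).1 heq.symm).symm

section Iso

variable {V' W' : Type*} {A : SimpleGraph V'} {B : SimpleGraph W'}

lemma iso_dist_le (f : A ≃g B) (x y : V') : B.dist (f x) (f y) ≤ A.dist x y := by
  by_cases hr : A.Reachable x y
  · obtain ⟨p, hp⟩ := hr.exists_walk_length_eq_dist
    have := SimpleGraph.dist_le (p.map f.toHom)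
    rwa [SimpleGraph.Walk.length_map, hp] at this
  · have hnr : ¬B.Reachable (f x) (f y) := by
      rintro ⟨p⟩
      exact hr ⟨(p.map f.symm.toHom).copy (by simp) (by simp)⟩
    rw [SimpleGraph.dist_eq_zero_of_not_reachable hnr,
      SimpleGraph.dist_eq_zero_of_not_reachable hr]

lemma iso_dist (f : A ≃g B) (x y : V') : B.dist (f x) (f y) = A.dist x y := by
  refine le_antisymm (iso_dist_le f x y) ?_
  have := iso_dist_le f.symm (f x) (f y)
  simpa using this

end Iso

lemma sym2_swap_eq {x y : V × W} {u u' : V} {v : W} :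
    s(Prod.swap x, Prod.swap y) = s((v, u), (v, u')) ↔ s(x, y) = s((u, v), (u', v)) := by
  have h1 : s(Prod.swap x, Prod.swap y) = Sym2.map Prod.swap s(x, y) :=
    (Sym2.map_pair_eq _ _ _).symm
  have h2 : (s((v, u), (v, u')) : Sym2 (W × V)) = Sym2.map Prod.swap s((u, v), (u', v)) := by
    rw [Sym2.map_pair_eq]; rfl
  rw [h1, h2]
  exact (Sym2.map.injective Prod.swap_injective).eq_iff

/-- The commutativity isomorphism restricted to the graphs with a layer edge deleted. -/
def swapDelIso (u u' : V) (v : W) :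
    ((G □ H).deleteEdges {s((u, v), (u', v))}) ≃g
      ((H □ G).deleteEdges {s((v, u), (v, u'))}) where
  toEquiv := Equiv.prodComm V W
  map_rel_iff' := by
    intro x y
    simp only [Equiv.prodComm_apply, SimpleGraph.deleteEdges_adj, Set.mem_singleton_iff,
      SimpleGraph.boxProd_adj, Prod.fst_swap, Prod.snd_swap]
    constructor
    · rintro ⟨h1, h2⟩
      refine ⟨by tauto, fun hm => h2 ?_⟩
      exact (sym2_swap_eq (x := x) (y := y) (u := u) (u' := u') (v := v)).mpr hm
    · rintro ⟨h1, h2⟩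
      refine ⟨by tauto, fun hm => h2 ?_⟩
      exact (sym2_swap_eq (x := x) (y := y) (u := u) (u' := u') (v := v)).mp hm

end DemAux

theorem stmt_11 {V W : Type*} (G : SimpleGraph V) (H : SimpleGraph W)
    (hG : G.Connected) (hH : H.Connected) (M : Set (V × W)) :
    (∀ (u : V) (v v' : W), H.Adj v v' →
      Pset (G □ H) M s((u, v), (u, v')) =
        (fun q : W × W => ((u, q.1), (u, q.2))) '' Pset H {w | (u, w) ∈ M} s(v, v')) ∧
    (∀ (v : W) (u u' : V), G.Adj u u' →
      Pset (G □ H) M s((u, v), (u', v)) =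
        (fun q : V × V => ((q.1, v), (q.2, v))) '' Pset G {a | (a, v) ∈ M} s(u, u')) := by
  constructor
  · intro u v v' hvv'
    exact DemAux.key hG hH M u v v' hvv'
  · intro v u u' huu'
    have hkey := DemAux.key hH hG (Prod.swap ⁻¹' M) v u u' huu'
    ext ⟨⟨a, b⟩, ⟨c, d⟩⟩
    have h1 : (H □ G).dist (b, a) (d, c) = (G □ H).dist (a, b) (c, d) :=
      DemAux.iso_dist (SimpleGraph.boxProdComm G H) (a, b) (c, d)
    have h2 : ((H □ G).deleteEdges {s((v, u), (v, u'))}).dist (b, a) (d, c) =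
        ((G □ H).deleteEdges {s((u, v), (u', v))}).dist (a, b) (c, d) :=
      DemAux.iso_dist (DemAux.swapDelIso u u' v) (a, b) (c, d)
    have h3 := Set.ext_iff.mp hkey ((b, a), (d, c))
    simp only [Set.mem_setOf_eq, Set.mem_image, Set.mem_preimage, Prod.swap_prod_mk] at h3
    simp only [Pset, Set.mem_setOf_eq, Set.mem_image]
    constructor
    · rintro ⟨hM, hd⟩
      have hmem : (a, b) ∈ M ∧
          (H □ G).dist (b, a) (d, c) ≠
            ((H □ G).deleteEdges {s((v, u), (v, u'))}).dist (b, a) (d, c) := by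
        refine ⟨hM, ?_⟩
        rw [h1, h2]; exact hd
      obtain ⟨⟨qa, qc⟩, hq, heq⟩ := h3.mp hmem
      simp only [Prod.mk.injEq] at heq
      obtain ⟨⟨hvb, hqa⟩, hvd, hqc⟩ := heq
      subst hvb; subst hqa; subst hvd; subst hqc
      exact ⟨(qa, qc), hq, rfl⟩
    · rintro ⟨⟨qa, qc⟩, hq, heq⟩
      simp only [Prod.mk.injEq] at heq
      obtain ⟨⟨hqa, hvb⟩, hqc, hvd⟩ := heq
      subst hqa; subst hvb; subst hqc; subst hvd
      have hres := h3.mpr ⟨(qa, qc), hq, rfl⟩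
      exact ⟨hres.1, by rw [← h1, ← h2]; exact hres.2⟩
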